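/- For a distribution P on a finite set 𝒳 and ρ > 0, the minimum over all probability distributions Q on 𝒳 of ∑_{x ∈ 𝒳} P(x)/Q(x)^ρ is achieved by the tilted distribution Q*(x) = P(x)^{1/(1+ρ)} / ∑_{x'} P(x')^{1/(1+ρ)}, and the minimum value equals (∑_{x ∈ 𝒳} P(x)^{1/(1+ρ)})^{1+ρ}. -/

import Mathlib

/-- For a full-support distribution `P` on a finite set `𝒳` and `ρ > 0`, the minimum over
probability distributions `Q` on `𝒳` of `∑_x P(x)/Q(x)^ρ` is achieved by the tilted
distribution `Q*(x) = P(x)^{1/(1+ρ)} / ∑_{x'} P(x')^{1/(1+ρ)}`, with minimum value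
`(∑_x P(x)^{1/(1+ρ)})^{1+ρ}`. -/
theorem stmt_4 {𝒳 : Type*} [Fintype 𝒳]
    (P : 𝒳 → ℝ) (hP0 : ∀ x, 0 < P x) (hP1 : ∑ x, P x = 1)
    (ρ : ℝ) (hρ : 0 < ρ)
    (Qstar : 𝒳 → ℝ)
    (hQstar : ∀ x, Qstar x = P x ^ (1 / (1 + ρ)) / ∑ x', P x' ^ (1 / (1 + ρ))) :
    (∀ x, 0 < Qstar x) ∧ (∑ x, Qstar x = 1) ∧
    (∀ Q : 𝒳 → ℝ, (∀ x, 0 < Q x) → (∑ x, Q x = 1) →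
        ∑ x, P x / Qstar x ^ ρ ≤ ∑ x, P x / Q x ^ ρ) ∧
    ∑ x, P x / Qstar x ^ ρ = (∑ x, P x ^ (1 / (1 + ρ))) ^ (1 + ρ) := by
  have h1ρ : 0 < 1 + ρ := by linarith
  set a : ℝ := 1 / (1 + ρ) with hadef
  have ha : (0:ℝ) < a := by positivity
  have haρ : a + a * ρ = 1 := by rw [hadef]; field_simp
  set S : ℝ := ∑ x', P x' ^ a with hSdef
  have hne : (Finset.univ : Finset 𝒳).Nonempty := by
    rcases (Finset.univ (α := 𝒳)).eq_empty_or_nonempty with h | h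
    · rw [h, Finset.sum_empty] at hP1; exact absurd hP1.symm one_ne_zero
    · exact h
  have hSpos : 0 < S :=
    Finset.sum_pos (fun x _ => Real.rpow_pos_of_pos (hP0 x) _) hne
  have hQpos : ∀ x, 0 < Qstar x := fun x => by
    rw [hQstar x]; exact div_pos (Real.rpow_pos_of_pos (hP0 x) _) hSpos
  -- value of each term at Qstar
  have hval : ∀ x, P x / Qstar x ^ ρ = P x ^ a * S ^ ρ := by
    intro x
    have hPa : (0:ℝ) < P x ^ a := Real.rpow_pos_of_pos (hP0 x) _
    have hSρ : (0:ℝ) < S ^ ρ := Real.rpow_pos_of_pos hSpos _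
    have hPaρ : (0:ℝ) < P x ^ (a * ρ) := Real.rpow_pos_of_pos (hP0 x) _
    rw [hQstar x, Real.div_rpow hPa.le hSpos.le, ← Real.rpow_mul (hP0 x).le,
      div_div_eq_mul_div, div_eq_iff hPaρ.ne']
    rw [mul_right_comm, ← Real.rpow_add (hP0 x), haρ, Real.rpow_one]
  -- total value at Qstar
  have hvalsum : ∑ x, P x / Qstar x ^ ρ = S ^ (1 + ρ) := by
    simp only [hval]
    rw [← Finset.sum_mul, ← hSdef, add_comm 1 ρ, Real.rpow_add hSpos, Real.rpow_one,
      mul_comm (S ^ ρ)]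
  refine ⟨hQpos, ?_, ?_, hvalsum⟩
  · simp only [hQstar, ← hadef, ← hSdef, ← Finset.sum_div]
    exact div_self hSpos.ne'
  · intro Q hQ0 hQ1
    rw [hvalsum]
    -- Hölder
    have hpq : Real.HolderConjugate (1 + ρ) ((1 + ρ) / ρ) := by
      constructor
      · rw [inv_eq_one_div, inv_eq_one_div, inv_one]
        field_simp
      · linarith
      · positivity
    set T : ℝ := ∑ x, P x / Q x ^ ρ with hTdef
    have hterm : ∀ x, (0:ℝ) < P x / Q x ^ ρ := fun x =>
      div_pos (hP0 x) (Real.rpow_pos_of_pos (hQ0 x) _)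
    have hTpos : 0 < T := Finset.sum_pos (fun x _ => hterm x) hne
    have key := Real.inner_le_Lp_mul_Lq (s := Finset.univ)
      (f := fun x => (P x / Q x ^ ρ) ^ a) (g := fun x => Q x ^ (ρ * a)) hpq
    have hfg : ∀ x, (P x / Q x ^ ρ) ^ a * Q x ^ (ρ * a) = P x ^ a := by
      intro x
      rw [Real.div_rpow (hP0 x).le (Real.rpow_pos_of_pos (hQ0 x) _).le,
        ← Real.rpow_mul (hQ0 x).le, div_mul_cancel₀]
      exact (Real.rpow_pos_of_pos (hQ0 x) _).ne'
    have hf : ∀ x, |(P x / Q x ^ ρ) ^ a| ^ (1 + ρ) = P x / Q x ^ ρ := by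
      intro x
      rw [abs_of_pos (Real.rpow_pos_of_pos (hterm x) _), ← Real.rpow_mul (hterm x).le,
        hadef, one_div_mul_cancel h1ρ.ne', Real.rpow_one]
    have hg : ∀ x, |Q x ^ (ρ * a)| ^ ((1 + ρ) / ρ) = Q x := by
      intro x
      rw [abs_of_pos (Real.rpow_pos_of_pos (hQ0 x) _), ← Real.rpow_mul (hQ0 x).le]
      have : ρ * a * ((1 + ρ) / ρ) = 1 := by rw [hadef]; field_simp
      rw [this, Real.rpow_one]
    simp only [hfg, hf, hg] at key
    rw [← hSdef, hQ1, Real.one_rpow, mul_one, ← hTdef] at key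
    have := Real.rpow_le_rpow hSpos.le key h1ρ.le
    rwa [← Real.rpow_mul hTpos.le, one_div_mul_cancel h1ρ.ne', Real.rpow_one] at this
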